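/- arXiv:0801.2481 — 8 statements merged into one kernel-verified Lean document; each statement's English description precedes it below -/
import Mathlib

section
/- The subalgebra $\mathcal{S} = k[t(1-t), t'(1-t'), t''(1-t'')]$ of $\mathcal{A} = k[t, t^{-1}, (1-t)^{-1}]$ equals $\mathcal{B} \oplus \mathcal{B}(2t-1)(1 - t(1-t))$, where $\mathcal{B} = k[t(1-t), (t(1-t))^{-1}]$. In particular $\mathcal{S}$ has codimension 1 in $\mathcal{A}$ and is thus a maximal subalgebra of $\mathcal{A}$. -/
/-- 𝒮 = k[t(1-t), t'(1-t'), t''(1-t'')] equals ℬ ⊕ ℬ(2t-1)(1-t(1-t)) with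
ℬ = k[t(1-t), (t(1-t))⁻¹]; in particular 𝒮 is a maximal subalgebra of
𝒜 = k[t, t⁻¹, (1-t)⁻¹]. -/
theorem stmt2 (k : Type*) [Field k] (h2 : (2:k) ≠ 0) (h3 : (3:k) ≠ 0) :
    let t : RatFunc k := RatFunc.X
    let t' : RatFunc k := 1 - t⁻¹
    let t'' : RatFunc k := (1 - t)⁻¹
    let 𝒜 : Subalgebra k (RatFunc k) := Algebra.adjoin k {t, t⁻¹, (1-t)⁻¹}
    let S : Subalgebra k (RatFunc k) :=
      Algebra.adjoin k {t*(1-t), t'*(1-t'), t''*(1-t'')}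
    let B : Subalgebra k (RatFunc k) := Algebra.adjoin k {t*(1-t), (t*(1-t))⁻¹}
    (∀ x : RatFunc k,
      x ∈ S ↔ ∃ b c, b ∈ B ∧ c ∈ B ∧ x = b + c * (2*t-1) * (1 - t*(1-t))) ∧
    (∀ b c, b ∈ B → c ∈ B → b + c * (2*t-1) * (1 - t*(1-t)) = 0 → b = 0 ∧ c = 0) ∧
    S ≤ 𝒜 ∧
    (∀ T : Subalgebra k (RatFunc k), S ≤ T → T ≤ 𝒜 → T = S ∨ T = 𝒜) := by
  intro t t' t'' 𝒜 S B
  have ht'def : t' = 1 - t⁻¹ := rfl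
  have ht''def : t'' = (1-t)⁻¹ := rfl
  have hSdef : S = Algebra.adjoin k {t*(1-t), t'*(1-t'), t''*(1-t'')} := rfl
  have hBdef : B = Algebra.adjoin k {t*(1-t), (t*(1-t))⁻¹} := rfl
  have hAdef : 𝒜 = Algebra.adjoin k {t, t⁻¹, (1-t)⁻¹} := rfl
  have hXdef : t = RatFunc.X := rfl
  -- nonvanishing facts
  have ht : t ≠ 0 := RatFunc.X_ne_zero
  have ht1 : (1:RatFunc k) - t ≠ 0 := by
    rw [hXdef, ← RatFunc.algebraMap_X, ← map_one (algebraMap (Polynomial k) (RatFunc k)),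
      ← map_sub]
    exact RatFunc.algebraMap_ne_zero (by
      intro h; have := congrArg (Polynomial.eval 0) h; simp at this)
  have hu : t*(1-t) ≠ 0 := mul_ne_zero ht ht1
  have h2R : (2:RatFunc k) ≠ 0 := fun h => h2 ((algebraMap k (RatFunc k)).injective
    (by rw [map_ofNat, map_zero]; exact h))
  have hw : 2*t-1 ≠ 0 := by
    rw [hXdef, ← RatFunc.algebraMap_X, ← map_one (algebraMap (Polynomial k) (RatFunc k)),
      ← map_ofNat (algebraMap (Polynomial k) (RatFunc k)) 2, ← map_mul, ← map_sub]
    exact RatFunc.algebraMap_ne_zero (by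
      intro h; have := congrArg (Polynomial.eval 0) h; simp at this)
  have hu1 : (1:RatFunc k) - t*(1-t) ≠ 0 := by
    rw [hXdef, ← RatFunc.algebraMap_X, ← map_one (algebraMap (Polynomial k) (RatFunc k)),
      ← map_sub, ← map_mul, ← map_sub]
    exact RatFunc.algebraMap_ne_zero (by
      intro h; have := congrArg (Polynomial.eval 0) h; simp at this)
  -- memberships of generators
  have huS : t*(1-t) ∈ S := by
    rw [hSdef]; exact Algebra.subset_adjoin (by simp)
  have hg2S : t'*(1-t') ∈ S := by
    rw [hSdef]; exact Algebra.subset_adjoin (by simp)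
  have hg3S : t''*(1-t'') ∈ S := by
    rw [hSdef]; exact Algebra.subset_adjoin (by simp)
  have huB : t*(1-t) ∈ B := by
    rw [hBdef]; exact Algebra.subset_adjoin (by simp)
  have huiB : (t*(1-t))⁻¹ ∈ B := by
    rw [hBdef]; exact Algebra.subset_adjoin (by simp)
  -- key identities
  have I1 : t'*(1-t') * (t''*(1-t'')) = (t*(1-t))⁻¹ := by
    rw [ht'def, ht''def]; field_simp; ring
  have huiS : (t*(1-t))⁻¹ ∈ S := by rw [← I1]; exact mul_mem hg2S hg3S
  have hBS : B ≤ S := by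
    rw [hBdef]
    apply Algebra.adjoin_le
    intro x hx
    simp only [Set.mem_insert_iff, Set.mem_singleton_iff] at hx
    rcases hx with rfl | rfl
    · exact huS
    · exact huiS
  have I2 : (t*(1-t))*(t*(1-t)) * (t'*(1-t') - t''*(1-t'')) = (2*t-1)*(1-t*(1-t)) := by
    rw [ht'def, ht''def]; field_simp; ring
  have hWS : (2*t-1)*(1-t*(1-t)) ∈ S := by
    rw [← I2]; exact mul_mem (mul_mem huS huS) (sub_mem hg2S hg3S)
  have h2iB : (2:RatFunc k)⁻¹ ∈ B := by
    rw [show ((2:RatFunc k))⁻¹ = algebraMap k (RatFunc k) (2⁻¹:k) by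
      rw [map_inv₀, map_ofNat]]
    exact B.algebraMap_mem _
  have h3B : (3:RatFunc k) ∈ B := by
    rw [← map_ofNat (algebraMap k (RatFunc k)) 3]; exact B.algebraMap_mem _
  have h4S : (4:RatFunc k) ∈ S := by
    rw [← map_ofNat (algebraMap k (RatFunc k)) 4]; exact S.algebraMap_mem _
  have h4B : (4:RatFunc k) ∈ B := by
    rw [← map_ofNat (algebraMap k (RatFunc k)) 4]; exact B.algebraMap_mem _
  -- Part 1, forward direction
  have part1fwd : ∀ x ∈ S, ∃ b c, b ∈ B ∧ c ∈ B ∧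
      x = b + c * (2*t-1) * (1 - t*(1-t)) := by
    intro x hx
    rw [hSdef] at hx
    induction hx using Algebra.adjoin_induction with
    | mem g hg =>
      simp only [Set.mem_insert_iff, Set.mem_singleton_iff] at hg
      rcases hg with rfl | rfl | rfl
      · exact ⟨t*(1-t), 0, huB, B.zero_mem, by ring⟩
      · refine ⟨(2:RatFunc k)⁻¹*((3*(t*(1-t))-1)*((t*(1-t))⁻¹*(t*(1-t))⁻¹)),
          (2:RatFunc k)⁻¹*((t*(1-t))⁻¹*(t*(1-t))⁻¹), ?_, ?_, ?_⟩
        · exact mul_mem h2iB (mul_mem (sub_mem (mul_mem h3B huB) B.one_mem)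
            (mul_mem huiB huiB))
        · exact mul_mem h2iB (mul_mem huiB huiB)
        · rw [ht'def]; field_simp; ring
      · refine ⟨(2:RatFunc k)⁻¹*((3*(t*(1-t))-1)*((t*(1-t))⁻¹*(t*(1-t))⁻¹)),
          -((2:RatFunc k)⁻¹*((t*(1-t))⁻¹*(t*(1-t))⁻¹)), ?_, ?_, ?_⟩
        · exact mul_mem h2iB (mul_mem (sub_mem (mul_mem h3B huB) B.one_mem)
            (mul_mem huiB huiB))
        · exact neg_mem (mul_mem h2iB (mul_mem huiB huiB))
        · rw [ht''def]; field_simp; ring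
    | algebraMap r => exact ⟨algebraMap k (RatFunc k) r, 0, B.algebraMap_mem r,
        B.zero_mem, by ring⟩
    | add x y hx hy ihx ihy =>
      obtain ⟨b1, c1, hb1, hc1, e1⟩ := ihx
      obtain ⟨b2, c2, hb2, hc2, e2⟩ := ihy
      exact ⟨b1+b2, c1+c2, add_mem hb1 hb2, add_mem hc1 hc2,
        by rw [e1, e2]; ring⟩
    | mul x y hx hy ihx ihy =>
      obtain ⟨b1, c1, hb1, hc1, e1⟩ := ihx
      obtain ⟨b2, c2, hb2, hc2, e2⟩ := ihy
      refine ⟨b1*b2 + c1*c2*((1-4*(t*(1-t)))*((1-t*(1-t))*(1-t*(1-t)))),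
        b1*c2 + c1*b2, ?_, ?_, ?_⟩
      · exact add_mem (mul_mem hb1 hb2) (mul_mem (mul_mem hc1 hc2)
          (mul_mem (sub_mem B.one_mem (mul_mem h4B huB))
            (mul_mem (sub_mem B.one_mem huB) (sub_mem B.one_mem huB))))
      · exact add_mem (mul_mem hb1 hc2) (mul_mem hc1 hb2)
      · rw [e1, e2]; ring
  -- Part 1, backward direction
  have part1bwd : ∀ b c, b ∈ B → c ∈ B →
      b + c * (2*t-1) * (1 - t*(1-t)) ∈ S := by
    intro b c hb hc
    have e : b + c * (2*t-1) * (1 - t*(1-t)) = b + c * ((2*t-1)*(1-t*(1-t))) := by ring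
    rw [e]
    exact add_mem (hBS hb) (mul_mem (hBS hc) hWS)
  -- σ : the automorphism t ↦ 1 - t
  let φ : Polynomial k →ₐ[k] RatFunc k := Polynomial.aeval (1 - t)
  have hkey : ∀ p : Polynomial k, φ p =
      algebraMap (Polynomial k) (RatFunc k) (p.comp (1 - Polynomial.X)) := by
    intro p
    rw [Polynomial.comp_eq_aeval]
    have := Polynomial.aeval_algHom_apply (IsScalarTower.toAlgHom k (Polynomial k) (RatFunc k))
      (1 - Polynomial.X) p
    simp only [IsScalarTower.coe_toAlgHom', map_sub, map_one, RatFunc.algebraMap_X] at this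
    exact this
  have hφinj : Function.Injective φ := by
    intro p q h
    rw [hkey, hkey] at h
    have hpq := RatFunc.algebraMap_injective k h
    have h3 := congrArg (fun r => Polynomial.comp r (1 - Polynomial.X)) hpq
    simpa [Polynomial.comp_assoc, Polynomial.sub_comp, Polynomial.one_comp,
      Polynomial.X_comp] using h3
  let σ : RatFunc k →ₐ[k] RatFunc k :=
    RatFunc.liftAlgHom φ (nonZeroDivisors_le_comap_nonZeroDivisors_of_injective _ hφinj)
  have hσa : ∀ p : Polynomial k, σ (algebraMap (Polynomial k) (RatFunc k) p) = φ p := by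
    intro p
    have := RatFunc.liftAlgHom_apply_div φ
      (nonZeroDivisors_le_comap_nonZeroDivisors_of_injective _ hφinj) p 1
    simpa using this
  have hσt : σ t = 1 - t := by
    rw [hXdef, ← RatFunc.algebraMap_X, hσa]
    simp [φ]
    exact hXdef
  have hσu : σ (t*(1-t)) = t*(1-t) := by
    rw [map_mul, map_sub, map_one, hσt]; ring
  have hσB : ∀ b ∈ B, σ b = b := by
    intro b hb
    rw [hBdef] at hb
    induction hb using Algebra.adjoin_induction with
    | mem g hg =>
      simp only [Set.mem_insert_iff, Set.mem_singleton_iff] at hg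
      rcases hg with rfl | rfl
      · exact hσu
      · rw [map_inv₀, hσu]
    | algebraMap r => exact σ.commutes r
    | add x y hx hy ihx ihy => rw [map_add, ihx, ihy]
    | mul x y hx hy ihx ihy => rw [map_mul, ihx, ihy]
  -- Part 2 : independence
  have part2 : ∀ b c, b ∈ B → c ∈ B →
      b + c * (2*t-1) * (1 - t*(1-t)) = 0 → b = 0 ∧ c = 0 := by
    intro b c hb hc heq
    have hσeq := congrArg σ heq
    rw [map_zero, map_add, map_mul, map_mul, map_sub, map_sub, map_mul, map_ofNat,
      map_one, hσt, hσB b hb, hσB c hc, hσu] at hσeq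
    have hb0 : b = 0 := by
      have h2b : (2:RatFunc k) * b = 0 := by linear_combination heq + hσeq
      rcases mul_eq_zero.mp h2b with h | h
      · exact absurd h h2R
      · exact h
    refine ⟨hb0, ?_⟩
    rw [hb0, zero_add] at heq
    rcases mul_eq_zero.mp heq with h | h
    · rcases mul_eq_zero.mp h with h' | h'
      · exact h'
      · exact absurd h' hw
    · exact absurd h hu1
  -- S ≤ 𝒜
  have htA : t ∈ 𝒜 := by rw [hAdef]; exact Algebra.subset_adjoin (by simp)
  have htiA : t⁻¹ ∈ 𝒜 := by rw [hAdef]; exact Algebra.subset_adjoin (by simp)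
  have ht1iA : (1-t)⁻¹ ∈ 𝒜 := by rw [hAdef]; exact Algebra.subset_adjoin (by simp)
  have hSA : S ≤ 𝒜 := by
    rw [hSdef]
    apply Algebra.adjoin_le
    intro x hx
    simp only [Set.mem_insert_iff, Set.mem_singleton_iff] at hx
    rcases hx with rfl | rfl | rfl
    · exact mul_mem htA (sub_mem 𝒜.one_mem htA)
    · rw [ht'def]
      exact mul_mem (sub_mem 𝒜.one_mem htiA) (sub_mem 𝒜.one_mem (sub_mem 𝒜.one_mem htiA))
    · rw [ht''def]
      exact mul_mem ht1iA (sub_mem 𝒜.one_mem ht1iA)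
  -- L1 : for b ∈ B, b*(2t-1) = s + l•(2t-1)
  have L1 : ∀ b ∈ B, ∃ s ∈ S, ∃ l : k,
      b*(2*t-1) = s + algebraMap k (RatFunc k) l * (2*t-1) := by
    intro b hb
    rw [hBdef] at hb
    induction hb using Algebra.adjoin_induction with
    | mem g hg =>
      simp only [Set.mem_insert_iff, Set.mem_singleton_iff] at hg
      rcases hg with rfl | rfl
      · refine ⟨-((2*t-1)*(1-t*(1-t))), neg_mem hWS, 1, ?_⟩
        rw [map_one]; ring
      · refine ⟨(t*(1-t))⁻¹ * ((2*t-1)*(1-t*(1-t))), mul_mem huiS hWS, 1, ?_⟩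
        rw [map_one]; field_simp; ring
    | algebraMap r => exact ⟨0, S.zero_mem, r, by ring⟩
    | add x y hx hy ihx ihy =>
      obtain ⟨s1, hs1, l1, e1⟩ := ihx
      obtain ⟨s2, hs2, l2, e2⟩ := ihy
      refine ⟨s1+s2, add_mem hs1 hs2, l1+l2, ?_⟩
      rw [map_add]; linear_combination e1 + e2
    | mul x y hx hy ihx ihy =>
      obtain ⟨s1, hs1, l1, e1⟩ := ihx
      obtain ⟨s2, hs2, l2, e2⟩ := ihy
      have hxS : x ∈ S := hBS (by rw [hBdef]; exact hx)
      refine ⟨x*s2 + algebraMap k (RatFunc k) l2 * s1,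
        add_mem (mul_mem hxS hs2) (mul_mem (S.algebraMap_mem l2) hs1), l2*l1, ?_⟩
      rw [map_mul]
      linear_combination x * e2 + (algebraMap k (RatFunc k) l2) * e1
    -- L5 : for s ∈ S, s*(2t-1) = s2 + b2*(2t-1) with s2 ∈ S, b2 ∈ B
  have L5 : ∀ s ∈ S, ∃ s2 ∈ S, ∃ b2 ∈ B, s*(2*t-1) = s2 + b2*(2*t-1) := by
    intro s hs
    obtain ⟨b, c, hb, hc, e⟩ := part1fwd s hs
    refine ⟨c*((1-4*(t*(1-t)))*(1-t*(1-t))), mul_mem (hBS hc)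
      (mul_mem (sub_mem S.one_mem (mul_mem h4S huS)) (sub_mem S.one_mem huS)),
      b, hb, ?_⟩
    rw [e]; ring
  -- L4' : every element of 𝒜 is s + b*(2t-1)
  have L4' : ∀ x ∈ 𝒜, ∃ s ∈ S, ∃ b ∈ B, x = s + b*(2*t-1) := by
    intro x hx
    rw [hAdef] at hx
    induction hx using Algebra.adjoin_induction with
    | mem g hg =>
      simp only [Set.mem_insert_iff, Set.mem_singleton_iff] at hg
      have h2i : (2:RatFunc k)⁻¹ = algebraMap k (RatFunc k) (2⁻¹:k) := by
        rw [map_inv₀, map_ofNat]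
      rcases hg with rfl | rfl | rfl
      · refine ⟨(2:RatFunc k)⁻¹, by rw [h2i]; exact S.algebraMap_mem _,
          (2:RatFunc k)⁻¹, by rw [h2i]; exact B.algebraMap_mem _, ?_⟩
        field_simp
        try ring
      · refine ⟨(2:RatFunc k)⁻¹ * (t*(1-t))⁻¹,
          mul_mem (by rw [h2i]; exact S.algebraMap_mem _) huiS,
          -((2:RatFunc k)⁻¹ * (t*(1-t))⁻¹),
          neg_mem (mul_mem (by rw [h2i]; exact B.algebraMap_mem _) huiB), ?_⟩
        field_simp; ring
      · refine ⟨(2:RatFunc k)⁻¹ * (t*(1-t))⁻¹,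
          mul_mem (by rw [h2i]; exact S.algebraMap_mem _) huiS,
          (2:RatFunc k)⁻¹ * (t*(1-t))⁻¹,
          mul_mem (by rw [h2i]; exact B.algebraMap_mem _) huiB, ?_⟩
        field_simp; ring
    | algebraMap r => exact ⟨algebraMap k (RatFunc k) r, S.algebraMap_mem r, 0,
        B.zero_mem, by ring⟩
    | add x y hx hy ihx ihy =>
      obtain ⟨s1, hs1, b1, hb1, e1⟩ := ihx
      obtain ⟨s2, hs2, b2, hb2, e2⟩ := ihy
      exact ⟨s1+s2, add_mem hs1 hs2, b1+b2, add_mem hb1 hb2, by rw [e1, e2]; ring⟩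
    | mul x y hx hy ihx ihy =>
      obtain ⟨s1, hs1, b1, hb1, e1⟩ := ihx
      obtain ⟨s2, hs2, b2, hb2, e2⟩ := ihy
      obtain ⟨s4, hs4, b4, hb4, f1⟩ := L5 s1 hs1
      obtain ⟨s3, hs3, b3, hb3, f2⟩ := L5 s2 hs2
      refine ⟨s1*s2 + b1*b2*(1-4*(t*(1-t))) + b1*s3 + b2*s4,
        add_mem (add_mem (add_mem (mul_mem hs1 hs2)
          (mul_mem (mul_mem (hBS hb1) (hBS hb2))
            (sub_mem S.one_mem (mul_mem h4S huS))))
          (mul_mem (hBS hb1) hs3)) (mul_mem (hBS hb2) hs4),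
        b1*b3 + b2*b4, add_mem (mul_mem hb1 hb3) (mul_mem hb2 hb4), ?_⟩
      linear_combination y*e1 + (s1 + b1*(2*t-1))*e2 + b1*f2 + b2*f1
  -- L4 : every element of 𝒜 is s + l•(2t-1)
  have L4 : ∀ x ∈ 𝒜, ∃ s ∈ S, ∃ l : k,
      x = s + algebraMap k (RatFunc k) l * (2*t-1) := by
    intro x hx
    obtain ⟨s, hs, b, hb, e⟩ := L4' x hx
    obtain ⟨s2, hs2, l, e2⟩ := L1 b hb
    exact ⟨s + s2, add_mem hs hs2, l, by rw [e, e2]; ring⟩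
  -- assemble
  refine ⟨?_, part2, hSA, ?_⟩
  · intro x
    constructor
    · exact part1fwd x
    · rintro ⟨b, c, hb, hc, rfl⟩
      exact part1bwd b c hb hc
  · intro T hST hTA
    by_cases hTS : T ≤ S
    · left; exact le_antisymm hTS hST
    · right
      obtain ⟨x, hxT, hxS⟩ := SetLike.not_le_iff_exists.mp hTS
      obtain ⟨s, hs, l, e⟩ := L4 x (hTA hxT)
      have hl : l ≠ 0 := by
        rintro rfl
        rw [map_zero, zero_mul, add_zero] at e
        exact hxS (e ▸ hs)
      have hwT : 2*t-1 ∈ T := by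
        have hal : algebraMap k (RatFunc k) l ≠ 0 := fun h => hl
          ((algebraMap k (RatFunc k)).injective (by rw [map_zero]; exact h))
        have key : algebraMap k (RatFunc k) l⁻¹ * (x - s) = 2*t-1 := by
          rw [e, add_sub_cancel_left, ← mul_assoc, ← map_mul, inv_mul_cancel₀ hl,
            map_one, one_mul]
        rw [← key]
        exact mul_mem (T.algebraMap_mem _) (sub_mem hxT (hST hs))
      have htT : t ∈ T := by
        have h2i : (2:RatFunc k)⁻¹ = algebraMap k (RatFunc k) (2⁻¹:k) := by
          rw [map_inv₀, map_ofNat]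
        have : t = (2:RatFunc k)⁻¹ * ((2*t-1) + 1) := by field_simp; ring
        rw [this, h2i]
        exact mul_mem (T.algebraMap_mem _) (add_mem hwT T.one_mem)
      have htiT : t⁻¹ ∈ T := by
        have : t⁻¹ = (t*(1-t))⁻¹ * (1 - t) := by
          field_simp
        rw [this]
        exact mul_mem (hST huiS) (sub_mem T.one_mem htT)
      have ht1iT : (1-t)⁻¹ ∈ T := by
        have : (1-t)⁻¹ = (t*(1-t))⁻¹ * t := by
          field_simp
        rw [this]
        exact mul_mem (hST huiS) htT
      refine le_antisymm hTA ?_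
      rw [hAdef]
      apply Algebra.adjoin_le
      intro x hx
      simp only [Set.mem_insert_iff, Set.mem_singleton_iff] at hx
      rcases hx with rfl | rfl | rfl
      · exact htT
      · exact htiT
      · exact ht1iT
end

section
/- Let $\tau_{\mathcal{A}}$ be the $k$-algebra automorphism of $\mathcal{A} = k[t, t^{-1}, (1-t)^{-1}]$ determined by $\tau_{\mathcal{A}}(t) = 1-t$. Then for $a \in \mathcal{A}$: $\tau_{\mathcal{A}}(a) = a$ if and only if $a \in k[t(1-t), (t(1-t))^{-1}]$, and $\tau_{\mathcal{A}}(a) = -a$ if and only if $a \in (2t-1)\,k[t(1-t), (t(1-t))^{-1}]$. -/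
/-- If `u * u ∈ B`, then `{b + u*c | b c ∈ B}` is a subalgebra. -/
def quadExt {k R : Type*} [CommSemiring k] [CommRing R] [Algebra k R]
    (B : Subalgebra k R) (u : R) (hu : u * u ∈ B) : Subalgebra k R where
  carrier := {x | ∃ b ∈ B, ∃ c ∈ B, x = b + u * c}
  one_mem' := ⟨1, B.one_mem, 0, B.zero_mem, by ring⟩
  zero_mem' := ⟨0, B.zero_mem, 0, B.zero_mem, by ring⟩
  add_mem' := by
    rintro x y ⟨b, hb, c, hc, rfl⟩ ⟨b', hb', c', hc', rfl⟩
    exact ⟨b + b', B.add_mem hb hb', c + c', B.add_mem hc hc', by ring⟩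
  mul_mem' := by
    rintro x y ⟨b, hb, c, hc, rfl⟩ ⟨b', hb', c', hc', rfl⟩
    exact ⟨b * b' + (u * u) * (c * c'),
      B.add_mem (B.mul_mem hb hb') (B.mul_mem hu (B.mul_mem hc hc')),
      b * c' + c * b', B.add_mem (B.mul_mem hb hc') (B.mul_mem hc hb'), by ring⟩
  algebraMap_mem' := fun r => ⟨algebraMap k R r, B.algebraMap_mem r, 0, B.zero_mem, by ring⟩

/-- For the automorphism τ of 𝒜 = k[t, t⁻¹, (1-t)⁻¹] with τ(t) = 1-t:
τ(a) = a iff a ∈ k[t(1-t), (t(1-t))⁻¹], and τ(a) = -a iff a lies in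
(2t-1)·k[t(1-t), (t(1-t))⁻¹]. -/
theorem stmt3 (k : Type*) [Field k] (h2 : (2:k) ≠ 0) (h3 : (3:k) ≠ 0)
    (τ : RatFunc k →ₐ[k] RatFunc k)
    (hτ : τ RatFunc.X = 1 - RatFunc.X) :
    let t : RatFunc k := RatFunc.X
    let 𝒜 : Subalgebra k (RatFunc k) := Algebra.adjoin k {t, t⁻¹, (1-t)⁻¹}
    let B : Subalgebra k (RatFunc k) := Algebra.adjoin k {t*(1-t), (t*(1-t))⁻¹}
    ∀ a ∈ 𝒜, (τ a = a ↔ a ∈ B) ∧ (τ a = -a ↔ ∃ b ∈ B, a = (2*t-1) * b) := by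
  intro t 𝒜 B
  -- nonvanishing facts
  have h2' : (2:RatFunc k) ≠ 0 := by
    rw [show (2:RatFunc k) = algebraMap k _ 2 from (map_ofNat _ 2).symm]
    exact (map_ne_zero _).mpr h2
  have ht : t ≠ 0 := RatFunc.X_ne_zero
  have ht1 : (1:RatFunc k) - t ≠ 0 := by
    rw [show (1:RatFunc k) - RatFunc.X = algebraMap (Polynomial k) _ (1 - Polynomial.X) by
      simp [RatFunc.algebraMap_X]]
    rw [map_ne_zero_iff _ (RatFunc.algebraMap_injective k)]
    intro h
    have := congrArg (Polynomial.coeff · 1) h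
    simp [Polynomial.coeff_one] at this
  have hu : 2 * t - 1 ≠ 0 := by
    rw [show (2:RatFunc k) * RatFunc.X - 1 = algebraMap (Polynomial k) _ (2*Polynomial.X - 1) by
      rw [map_sub, map_mul, RatFunc.algebraMap_X, map_one, map_ofNat]]
    rw [map_ne_zero_iff _ (RatFunc.algebraMap_injective k)]
    intro h
    have := congrArg (Polynomial.coeff · 1) h
    simp [Polynomial.coeff_one, h2] at this
  have hs : t * (1 - t) ≠ 0 := mul_ne_zero ht ht1
  -- generators of B
  have hsB : t * (1 - t) ∈ B := Algebra.subset_adjoin (by simp)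
  have hsiB : (t * (1 - t))⁻¹ ∈ B := Algebra.subset_adjoin (by simp)
  -- τ fixes B pointwise
  have hτB : ∀ x ∈ B, τ x = x := by
    have hle : B ≤ AlgHom.equalizer τ (AlgHom.id k (RatFunc k)) := by
      apply Algebra.adjoin_le
      rintro x hx
      simp only [Set.mem_insert_iff, Set.mem_singleton_iff] at hx
      rcases hx with rfl | rfl
      · show τ (t * (1 - t)) = t * (1 - t)
        rw [map_mul, map_sub, map_one, hτ]; ring
      · show τ (t * (1 - t))⁻¹ = (t * (1 - t))⁻¹
        rw [map_inv₀, map_mul, map_sub, map_one, hτ]; ring_nf; rfl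
    intro x hx
    exact hle hx
  have hτu : τ (2 * t - 1) = -(2 * t - 1) := by
    have : τ ((2:RatFunc k) * t - 1) = 2 * (1 - t) - 1 := by
      rw [map_sub, map_mul, map_ofNat, map_one, hτ]
    rw [this]; ring
  -- u² ∈ B
  have huB : (2 * t - 1) * (2 * t - 1) ∈ B := by
    have h4 : (4:RatFunc k) ∈ B := by
      rw [show (4:RatFunc k) = algebraMap k _ 4 from (map_ofNat _ 4).symm]
      exact B.algebraMap_mem 4
    have : (2 * t - 1) * (2 * t - 1) = 1 - 4 * (t * (1 - t)) := by ring
    rw [this]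
    exact B.sub_mem B.one_mem (B.mul_mem h4 hsB)
  -- membership of algebraMap 2⁻¹
  have e2 : (algebraMap k (RatFunc k)) 2⁻¹ = (2:RatFunc k)⁻¹ := by
    rw [map_inv₀, map_ofNat]
  have h2B : (2:RatFunc k)⁻¹ ∈ B := e2 ▸ B.algebraMap_mem 2⁻¹
  -- 𝒜 ⊆ quadExt B u
  have hdec : 𝒜 ≤ quadExt B (2 * t - 1) huB := by
    apply Algebra.adjoin_le
    rintro x hx
    simp only [Set.mem_insert_iff, Set.mem_singleton_iff] at hx
    rcases hx with rfl | rfl | rfl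
    · exact ⟨(2:RatFunc k)⁻¹, h2B, (2:RatFunc k)⁻¹, h2B, by field_simp; ring⟩
    · exact ⟨(2:RatFunc k)⁻¹ * (t * (1 - t))⁻¹, B.mul_mem h2B hsiB,
        -((2:RatFunc k)⁻¹ * (t * (1 - t))⁻¹), B.neg_mem (B.mul_mem h2B hsiB),
        by field_simp; ring⟩
    · exact ⟨(2:RatFunc k)⁻¹ * (t * (1 - t))⁻¹, B.mul_mem h2B hsiB,
        (2:RatFunc k)⁻¹ * (t * (1 - t))⁻¹, B.mul_mem h2B hsiB,
        by field_simp; ring⟩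
  intro a ha
  obtain ⟨b, hb, c, hc, rfl⟩ := hdec ha
  have hτa : τ (b + (2 * t - 1) * c) = b - (2 * t - 1) * c := by
    rw [map_add, map_mul, hτB b hb, hτB c hc, hτu]; ring
  constructor
  · constructor
    · intro h
      rw [hτa] at h
      have h2c : (2:RatFunc k) * ((2 * t - 1) * c) = 0 := by linear_combination -h
      have hc0 : c = 0 := by
        rcases mul_eq_zero.mp h2c with h' | h'
        · exact absurd h' h2'
        · rcases mul_eq_zero.mp h' with h'' | h''
          · exact absurd h'' hu
          · exact h''
      rw [hc0, mul_zero, add_zero]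
      exact hb
    · intro h
      exact hτB _ h
  · constructor
    · intro h
      rw [hτa] at h
      have h2b : (2:RatFunc k) * b = 0 := by linear_combination h
      have hb0 : b = 0 := by
        rcases mul_eq_zero.mp h2b with h' | h'
        · exact absurd h' h2'
        · exact h'
      exact ⟨c, hc, by rw [hb0, zero_add]⟩
    · rintro ⟨b', hb', he⟩
      rw [he, map_mul, hτu, hτB b' hb']
      ring
end

section
/- Let $M$ be a $k$-vector space with an anticommutative bilinear product $(x,y) \mapsto xy$ and a trilinear product $\{x,y,z\}$ satisfying: (a) $(xy)z = \{x,z,y\} - \{y,z,x\}$; (b) $\{a,b,xy\} = -\{b,a,x\}y - x\{b,a,y\}$; (c) $\{a,b,\{x,y,z\}\} - \{x,y,\{a,b,z\}\} = \{\{a,b,x\},y,z\} - \{x,\{b,a,y\},z\}$, for all elements. Then for all $x,y,z,t \in M$: $\{xy,z,t\} + \{yz,x,t\} + \{zx,y,t\} = 0$. -/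
/-- If an anticommutative bilinear product and a trilinear product satisfy
identities (a), (b), (c), then {xy,z,t} + {yz,x,t} + {zx,y,t} = 0. -/
theorem stmt7 (k : Type*) [Field k] (h2 : (2:k) ≠ 0) (h3 : (3:k) ≠ 0)
    (M : Type*) [AddCommGroup M] [Module k M]
    (mul : M →ₗ[k] M →ₗ[k] M) (trip : M →ₗ[k] M →ₗ[k] M →ₗ[k] M)
    (hanti : ∀ x y, mul x y = - mul y x)
    (ha : ∀ x y z, mul (mul x y) z = trip x z y - trip y z x)
    (hb : ∀ a b x y,
      trip a b (mul x y) = - mul (trip b a x) y - mul x (trip b a y))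
    (hc : ∀ a b x y z,
      trip a b (trip x y z) - trip x y (trip a b z)
        = trip (trip a b x) y z - trip x (trip b a y) z) :
    ∀ x y z t : M,
      trip (mul x y) z t + trip (mul y z) x t + trip (mul z x) y t = 0 := by
  intro x y z t
  have key : ∀ a b c : M, trip (mul a b) c t
      = mul (trip a t b) c - mul (trip b t a) c
        - mul (trip c t a) b + mul (trip c t b) a := by
    intro a b c
    have h1 := ha (mul a b) t c
    -- h1 : mul (mul (mul a b) t) c = trip (mul a b) c t - trip t c (mul a b)
    rw [ha a b t] at h1
    simp only [map_sub, LinearMap.sub_apply] at h1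
    have h3 := hb t c a b
    have h4 := hanti a (trip c t b)
    rw [h3, h4] at h1
    -- h1 : mul (trip a t b) c - mul (trip b t a) c
    --      = trip (mul a b) c t - (- mul (trip c t a) b - - mul (trip c t b) a)
    have := h1.symm
    rw [sub_eq_iff_eq_add] at this
    rw [this]
    abel
  rw [key x y z, key y z x, key z x y]
  abel
end

section
/- Let $M$ be a $k$-vector space with an anticommutative bilinear product $xy$ and trilinear product $\{x,y,z\}$ satisfying identities (a) $(xy)z = \{x,z,y\} - \{y,z,x\}$, (b) $\{a,b,xy\} = -\{b,a,x\}y - x\{b,a,y\}$, (c) $\{a,b,\{x,y,z\}\} - \{x,y,\{a,b,z\}\} = \{\{a,b,x\},y,z\} - \{x,\{b,a,y\},z\}$. If moreover $M = M^2$ (i.e., $M$ is spanned by products $xy$), then $\{x,yz,t\} + \{y,zx,t\} + \{z,xy,t\} = 0$ for all $x,y,z,t \in M$. -/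
/-- Under identities (a), (b), (c), if M = M², then
{x,yz,t} + {y,zx,t} + {z,xy,t} = 0. -/
theorem stmt8 (k : Type*) [Field k] (h2 : (2:k) ≠ 0) (h3 : (3:k) ≠ 0)
    (M : Type*) [AddCommGroup M] [Module k M]
    (mul : M →ₗ[k] M →ₗ[k] M) (trip : M →ₗ[k] M →ₗ[k] M →ₗ[k] M)
    (hanti : ∀ x y, mul x y = - mul y x)
    (ha : ∀ x y z, mul (mul x y) z = trip x z y - trip y z x)
    (hb : ∀ a b x y,
      trip a b (mul x y) = - mul (trip b a x) y - mul x (trip b a y))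
    (hc : ∀ a b x y z,
      trip a b (trip x y z) - trip x y (trip a b z)
        = trip (trip a b x) y z - trip x (trip b a y) z)
    (hM2 : (⊤ : Submodule k M) = Submodule.span k {m | ∃ x y, m = mul x y}) :
    ∀ x y z t : M,
      trip x (mul y z) t + trip y (mul z x) t + trip z (mul x y) t = 0 := by
  -- Key lemma: cyclic identity with the product in the FIRST slot holds for all u.
  have L : ∀ x y z u : M,
      trip (mul y z) x u + trip (mul z x) y u + trip (mul x y) z u = 0 := by
    intro x y z u
    have e1 : trip (mul y z) x u = mul (mul (mul y z) u) x + trip u x (mul y z) := by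
      rw [ha (mul y z) u x]; abel
    have e2 : trip (mul z x) y u = mul (mul (mul z x) u) y + trip u y (mul z x) := by
      rw [ha (mul z x) u y]; abel
    have e3 : trip (mul x y) z u = mul (mul (mul x y) u) z + trip u z (mul x y) := by
      rw [ha (mul x y) u z]; abel
    rw [e1, e2, e3, ha y z u, ha z x u, ha x y u,
      hb u x y z, hb u y z x, hb u z x y]
    simp only [map_sub, LinearMap.sub_apply]
    rw [hanti y (trip x u z), hanti z (trip y u x), hanti x (trip z u y)]
    abel
  intro x y z t
  -- the set of t satisfying the goal is a submodule
  let N : Submodule k M :=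
    { carrier := {t | trip x (mul y z) t + trip y (mul z x) t + trip z (mul x y) t = 0}
      add_mem' := by
        intro a b pa pb
        simp only [Set.mem_setOf_eq, map_add] at pa pb ⊢
        calc trip x (mul y z) a + trip x (mul y z) b +
              (trip y (mul z x) a + trip y (mul z x) b) +
              (trip z (mul x y) a + trip z (mul x y) b)
            = (trip x (mul y z) a + trip y (mul z x) a + trip z (mul x y) a) +
              (trip x (mul y z) b + trip y (mul z x) b + trip z (mul x y) b) := by abel
          _ = 0 := by rw [pa, pb]; simp
      zero_mem' := by simp
      smul_mem' := by
        intro c a pa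
        simp only [Set.mem_setOf_eq, map_smul] at pa ⊢
        rw [← smul_add, ← smul_add, pa, smul_zero] }
  have hgen : {m | ∃ u v, m = mul u v} ⊆ (N : Set M) := by
    rintro m ⟨u, v, rfl⟩
    show trip x (mul y z) (mul u v) + trip y (mul z x) (mul u v)
        + trip z (mul x y) (mul u v) = 0
    rw [hb x (mul y z) u v, hb y (mul z x) u v, hb z (mul x y) u v]
    have h1 : mul (trip (mul y z) x u + trip (mul z x) y u + trip (mul x y) z u) v = 0 := by
      rw [L x y z u]; simp
    have h2 : mul u (trip (mul y z) x v + trip (mul z x) y v + trip (mul x y) z v) = 0 := by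
      rw [L x y z v]; simp
    simp only [map_add, LinearMap.add_apply] at h1 h2
    calc -mul (trip (mul y z) x u) v - mul u (trip (mul y z) x v) +
          (-mul (trip (mul z x) y u) v - mul u (trip (mul z x) y v)) +
          (-mul (trip (mul x y) z u) v - mul u (trip (mul x y) z v))
        = -(mul (trip (mul y z) x u) v + mul (trip (mul z x) y u) v
              + mul (trip (mul x y) z u) v)
          - (mul u (trip (mul y z) x v) + mul u (trip (mul z x) y v)
              + mul u (trip (mul x y) z v)) := by abel
      _ = 0 := by rw [h1, h2]; simp
  have hle : Submodule.span k {m | ∃ u v, m = mul u v} ≤ N := Submodule.span_le.mpr hgen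
  exact hle (by rw [← hM2]; trivial)
end

section
/- Let $(M, xy, \{x,y,z\})$ be a generalized Malcev algebra such that the triple product $\{x,y,z\}$ is skew-symmetric in $x$ and $y$. Then $(M, xy)$ is a Malcev algebra, and $2\{x,y,z\} = (xy)z + x(yz) - y(xz)$ for all $x,y,z \in M$. -/
/-- If (M, xy, {x,y,z}) is a generalized Malcev algebra with {x,y,z}
skew-symmetric in x, y, then (M, xy) is a Malcev algebra and
2{x,y,z} = (xy)z + x(yz) - y(xz). -/
theorem stmt9 (k : Type*) [Field k] (hk2 : (2:k) ≠ 0) (hk3 : (3:k) ≠ 0)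
    (M : Type*) [AddCommGroup M] [Module k M]
    (mul : M →ₗ[k] M →ₗ[k] M) (trip : M →ₗ[k] M →ₗ[k] M →ₗ[k] M)
    (hanti : ∀ x y, mul x y = - mul y x)
    (h1 : ∀ x y z, mul (mul x y) z = trip x z y - trip y z x)
    (h2 : ∀ a b x y,
      trip a b (mul x y) = - mul (trip b a x) y - mul x (trip b a y))
    (h3 : ∀ a b x y z,
      trip a b (trip x y z) - trip x y (trip a b z)
        = trip (trip a b x) y z - trip x (trip b a y) z)
    (h4a : ∀ x y z t,
      trip (mul x y) z t + trip (mul y z) x t + trip (mul z x) y t = 0)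
    (h4b : ∀ x y z t,
      trip x (mul y z) t + trip y (mul z x) t + trip z (mul x y) t = 0)
    (hskew : ∀ x y z, trip x y z = - trip y x z) :
    let J : M → M → M → M := fun x y z =>
      mul (mul x y) z + mul (mul y z) x + mul (mul z x) y
    (∀ x y z : M, J x y (mul x z) = mul (J x y z) x) ∧
    (∀ x y z : M,
      (2 : k) • trip x y z
        = mul (mul x y) z + mul x (mul y z) - mul y (mul x z)) := by
  intro J
  -- The key identity: 2{x,y,z} = (xy)z + x(yz) - y(xz).
  have part2 : ∀ x y z : M,
      (2 : k) • trip x y z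
        = mul (mul x y) z + mul x (mul y z) - mul y (mul x z) := by
    intro x y z
    rw [h1 x y z, hanti x (mul y z), h1 y z x, hanti y (mul x z), h1 x z y,
      hskew z x y, hskew z y x, hskew y x z]
    module
  -- Bridge lemmas: multiplying the key identity on either side.
  have bridgeL : ∀ a b c d : M,
      (2:k) • mul (trip a b c) d
        = mul (mul (mul a b) c) d + mul (mul a (mul b c)) d
            - mul (mul b (mul a c)) d := by
    intro a b c d
    have h := congrArg (fun v : M => mul v d) (part2 a b c)
    simpa only [map_smul, LinearMap.smul_apply, map_add, LinearMap.add_apply,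
      map_sub, LinearMap.sub_apply] using h
  have bridgeR : ∀ a b c d : M,
      (2:k) • mul a (trip b c d)
        = mul a (mul (mul b c) d) + mul a (mul b (mul c d))
            - mul a (mul c (mul b d)) := by
    intro a b c d
    have h := congrArg (fun v : M => mul a v) (part2 b c d)
    simpa only [map_smul, map_add, map_sub] using h
  -- Anticommutativity in nested positions.
  have FL : ∀ a b c : M, mul (mul a b) c = - mul (mul b a) c := by
    intro a b c
    rw [hanti a b, map_neg, LinearMap.neg_apply]
  have FR : ∀ a b c : M, mul c (mul a b) = - mul c (mul b a) := by
    intro a b c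
    rw [hanti a b, map_neg]
  have FRR : ∀ a b c d : M,
      mul a (mul b (mul c d)) = - mul a (mul b (mul d c)) := by
    intro a b c d
    rw [hanti c d, map_neg, map_neg]
  refine ⟨?_, part2⟩
  intro x y z
  show mul (mul x y) (mul x z) + mul (mul y (mul x z)) x
        + mul (mul (mul x z) x) y
      = mul (mul (mul x y) z + mul (mul y z) x + mul (mul z x) y) x
  rw [map_add, map_add, LinearMap.add_apply, LinearMap.add_apply]
  -- Prepare the needed instances of the axioms, with trip eliminated.
  have f1 := congrArg (fun v : M => (2:k) • v) (h2 x x y z)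
  have f2 := congrArg (fun v : M => (2:k) • v) (h4a x x y z)
  have f3 := congrArg (fun v : M => (2:k) • v) (h4b x x y z)
  have f4 := congrArg (fun v : M => (2:k) • v) (h2 x x z y)
  have f5 := congrArg (fun v : M => (2:k) • v) (h4a x x z y)
  have f6 := congrArg (fun v : M => (2:k) • v) (h4b x x z y)
  have f7 := congrArg (fun v : M => (2:k) • v) (h2 x y x z)
  have f8 := congrArg (fun v : M => (2:k) • v) (h4a x y z x)
  have f9 := congrArg (fun v : M => (2:k) • v) (h4b x y z x)
  have f10 := congrArg (fun v : M => (2:k) • v) (h2 x z x y)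
  have f11 := congrArg (fun v : M => (2:k) • v) (h2 y x x z)
  have f12 := congrArg (fun v : M => (2:k) • v) (h2 z x x y)
  simp only [smul_add, smul_sub, smul_neg, smul_zero, part2, bridgeL, bridgeR]
    at f1 f2 f3 f4 f5 f6 f7 f8 f9 f10 f11 f12
  have h6 : (6:k) ≠ 0 := by
    have h23 : (6:k) = 2 * 3 := by norm_num
    rw [h23]; exact mul_ne_zero hk2 hk3
  have key : (6:k) • (mul (mul x y) (mul x z) + mul (mul y (mul x z)) x
        + mul (mul (mul x z) x) y)
      = (6:k) • (mul (mul (mul x y) z) x + mul (mul (mul y z) x) x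
        + mul (mul (mul z x) y) x) := by
    linear_combination (norm := module)
        (2 : k) • f1 +
        (-4 : k) • f2 +
        (-2 : k) • f3 +
        (-1 : k) • f4 +
        (5 : k) • f5 +
        (4 : k) • f6 +
        (4 : k) • f7 +
        (-6 : k) • f8 +
        (-6 : k) • f9 +
        (-5 : k) • f10 +
        (2 : k) • f11 +
        (-1 : k) • f12 +
        (6 : k) • (hanti x (mul x (mul y z))) +
        (-4 : k) • (FRR x x y z) +
        (6 : k) • (hanti x (mul y (mul x z))) +
        (2 : k) • (FR y (mul x z) x) +
        (-12 : k) • (FRR x y x z) +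
        (6 : k) • (hanti x (mul y (mul z x))) +
        (6 : k) • (FR y (mul z x) x) +
        (6 : k) • (hanti x (mul z (mul x y))) +
        (-4 : k) • (FR z (mul x y) x) +
        (6 : k) • (FRR x z x y) +
        (-6 : k) • (FR z (mul y x) x) +
        (-4 : k) • (hanti y (mul x (mul x z))) +
        (-2 : k) • (FR x (mul x z) y) +
        (8 : k) • (FRR y x x z) +
        (-8 : k) • (hanti y (mul x (mul z x))) +
        (-4 : k) • (hanti y (mul (mul x x) z)) +
        (2 : k) • (hanti y (mul (mul x z) x)) +
        (2 : k) • (hanti z (mul x (mul x y))) +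
        (-2 : k) • (FR x (mul x y) z) +
        (-4 : k) • (FRR z x x y) +
        (4 : k) • (hanti z (mul x (mul y x))) +
        (2 : k) • (hanti z (mul (mul x x) y)) +
        (2 : k) • (hanti z (mul (mul x y) x)) +
        (4 : k) • (hanti (mul x y) (mul x z))
  have key2 := congrArg (fun v : M => (6:k)⁻¹ • v) key
  simpa only [smul_smul, inv_mul_cancel₀ h6, one_smul] using key2
end

section
/- Let $E$ be a three-dimensional vector space over a field $k$ of characteristic not 2 or 3, with a nondegenerate symmetric bilinear form $b$ and a cross product $\times$ satisfying $(u \times v) \times w = b(u,w)v - b(v,w)u$ for all $u,v,w$. Define $xy = 2\, x \times y$ and $\{x,y,z\} = b(x,y)z - 3b(y,z)x$. Then $(E, xy, \{x,y,z\})$ satisfies the generalized Malcev algebra identities: (1) $(xy)z = \{x,z,y\} - \{y,z,x\}$; (2) $\{a,b,xy\} = -\{b,a,x\}y - x\{b,a,y\}$; (3) $\{a,b,\{x,y,z\}\} - \{x,y,\{a,b,z\}\} = \{\{a,b,x\},y,z\} - \{x,\{b,a,y\},z\}$; (4) $\{xy,z,t\} + \{yz,x,t\} + \{zx,y,t\}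 = 0$ and $\{x,yz,t\} + \{y,zx,t\} + \{z,xy,t\} = 0$. -/
/-- On a 3-dimensional space E with nondegenerate symmetric bilinear form b
and cross product satisfying (u×v)×w = b(u,w)v - b(v,w)u, the products
xy = 2 x×y and {x,y,z} = b(x,y)z - 3b(y,z)x satisfy the generalized Malcev
algebra identities (1)-(4). -/
theorem stmt13 (k : Type*) [Field k] (hk2 : (2:k) ≠ 0) (hk3 : (3:k) ≠ 0)
    (E : Type*) [AddCommGroup E] [Module k E]
    (hdim : Module.finrank k E = 3)
    (b : E →ₗ[k] E →ₗ[k] k)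
    (hsymm : ∀ x y, b x y = b y x)
    (hnondeg : ∀ x, (∀ y, b x y = 0) → x = 0)
    (cross : E →ₗ[k] E →ₗ[k] E)
    (halt : ∀ x, cross x x = 0)
    (hcross : ∀ u v w, cross (cross u v) w = b u w • v - b v w • u)
    (hcross2 : ∀ x y z t,
      b (cross x y) (cross z t) = b x z * b y t - b x t * b y z) :
    let mul : E → E → E := fun x y => (2 : k) • cross x y
    let trip : E → E → E → E := fun x y z => b x y • z - (3 * b y z) • x
    (∀ x y z, mul (mul x y) z = trip x z y - trip y z x) ∧
    (∀ a' b' x y,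
      trip a' b' (mul x y) = - mul (trip b' a' x) y - mul x (trip b' a' y)) ∧
    (∀ a' b' x y z,
      trip a' b' (trip x y z) - trip x y (trip a' b' z)
        = trip (trip a' b' x) y z - trip x (trip b' a' y) z) ∧
    (∀ x y z t,
      trip (mul x y) z t + trip (mul y z) x t + trip (mul z x) y t = 0) ∧
    (∀ x y z t,
      trip x (mul y z) t + trip y (mul z x) t + trip z (mul x y) t = 0) := by
  -- antisymmetry of cross
  have hanti : ∀ x y, cross x y = - cross y x := by
    intro x y
    have h := halt (x + y)
    simp only [map_add, LinearMap.add_apply, halt] at h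
    have h2 : cross x y + cross y x = 0 := by
      have := h; rw [← this]; abel
    exact eq_neg_of_add_eq_zero_left h2
  -- the fundamental vector identity
  have hV : ∀ a c x y, b (cross x y) c • a
      = b a c • cross x y + b a x • cross y c - b a y • cross x c := by
    intro a c x y
    have h1 := hcross (cross x y) a c
    rw [hcross x y a] at h1
    simp only [map_sub, map_smul, LinearMap.sub_apply, LinearMap.smul_apply] at h1
    rw [hsymm x a, hsymm y a] at h1
    linear_combination (norm := module) -h1
  -- E is nontrivial
  have hnt : Nontrivial E := by
    by_contra h
    rw [not_nontrivial_iff_subsingleton] at h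
    rw [Module.finrank_zero_of_subsingleton] at hdim
    norm_num at hdim
  obtain ⟨a0, ha0⟩ := exists_ne (0 : E)
  -- cyclic symmetry of the scalar triple product
  have hcyc : ∀ x y z, b (cross x y) z = b (cross y z) x := by
    intro x y z
    have e1 := hV a0 z x y
    have e2 := hV a0 x y z
    rw [hanti z x, hanti y x] at e2
    have key : (b (cross x y) z - b (cross y z) x) • a0 = 0 := by
      linear_combination (norm := module) e1 - e2
    rcases smul_eq_zero.mp key with h | h
    · exact sub_eq_zero.mp h
    · exact absurd h ha0
  -- the second vector identity
  have hB : ∀ x y z t, b (cross x y) z • t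
      = b (cross y z) t • x + b (cross z x) t • y + b (cross x y) t • z := by
    intro x y z t
    have e3 := hanti (cross x y) (cross z t)
    rw [hcross x y (cross z t), hcross z t (cross x y)] at e3
    rw [hsymm x (cross z t), hsymm y (cross z t), hsymm z (cross x y),
      hsymm t (cross x y)] at e3
    rw [← hcyc x z t, ← hcyc y z t] at e3
    rw [hanti x z] at e3
    simp only [map_neg, LinearMap.neg_apply] at e3
    linear_combination (norm := module) e3
  intro mul trip
  refine ⟨?_, ?_, ?_, ?_, ?_⟩
  · -- identity (1)
    intro x y z
    simp only [mul, trip, map_smul, LinearMap.smul_apply]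
    rw [hcross x y z, hsymm z y, hsymm z x]
    module
  · -- identity (2)
    intro a' b' x y
    simp only [mul, trip, map_sub, map_smul, LinearMap.sub_apply,
      LinearMap.smul_apply, smul_eq_mul]
    rw [hanti b' y, hsymm b' a', hsymm b' (cross x y)]
    linear_combination (norm := module) (-6 : k) • hV a' b' x y
  · -- identity (3)
    intro a' b' x y z
    simp only [mul, trip, map_sub, map_smul, LinearMap.sub_apply,
      LinearMap.smul_apply, smul_eq_mul]
    rw [hsymm b' a', hsymm y a', hsymm x b']
    module
  · -- identity (4a)
    intro x y z t
    simp only [mul, trip, map_smul, LinearMap.smul_apply, smul_eq_mul]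
    rw [← hcyc x y z, hcyc z x y]
    rw [hsymm z t, hsymm x t, hsymm y t, hanti z x]
    simp only [map_neg, LinearMap.neg_apply, smul_neg, neg_smul]
    linear_combination (norm := module) (6 : k) • hV t z x y
  · -- identity (4b)
    intro x y z t
    simp only [mul, trip, map_smul, LinearMap.smul_apply, smul_eq_mul]
    rw [hsymm x (cross y z), hsymm y (cross z x), hsymm z (cross x y)]
    rw [← hcyc x y z, hcyc z x y]
    linear_combination (norm := module) (6 : k) • hB x y z t
end

section
/- Let $M$ be a vector space over a field $k$ of characteristic not 2 or 3, with basis vector $a$, a subspace $E$, and its dual subspace $E^*$, so $M = ka \oplus E \oplus E^*$. Define the anticommutative product by $ae = -e$, $af = f$, $fe = f(e)a$ (extended anticommutatively, with $E E = 0 = E^* E^*$), and the triple product by: $\{a,a,a\} = 2a$, $\{a,a,e\} = -e$, $\{a,a,f\} = -f$, $\{e,f,a\} = \{f,e,a\} = -f(e)a$, $\{e,f,e'\} = f(e')e + f(e)e'$, $\{f,e,e'\} = -f(e')e$, $\{e,f,f'\} = -f'(e)f$, $\{f,e,f'\} = f'(e)f + f(e)f'$, all other products involving $a$ in the first two slots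 with mixed arguments being zero. Then $(M, xy, \{x,y,z\})$ satisfies the generalized Malcev algebra identities (1)-(4). Moreover, if $\dim E \geq 2$, then $(M, xy)$ is not a Malcev algebra. -/
section aux
variable {k : Type*} [Field k] {E : Type*} [AddCommGroup E] [Module k E]

local notation "M'" => k × E × Module.Dual k E

private def pmul : M' → M' → M' := fun x y =>
  (x.2.2 y.2.1 - y.2.2 x.2.1,
   y.1 • x.2.1 - x.1 • y.2.1,
   x.1 • y.2.2 - y.1 • x.2.2)

private def ptrip : M' → M' → M' → M' := fun x y z =>
  (2 * x.1 * y.1 * z.1 - z.1 * (y.2.2 x.2.1 + x.2.2 y.2.1),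
   y.2.2 z.2.1 • x.2.1 - x.2.2 z.2.1 • y.2.1
     + (y.2.2 x.2.1 - x.1 * y.1) • z.2.1,
   z.2.2 y.2.1 • x.2.2 - z.2.2 x.2.1 • y.2.2
     + (x.2.2 y.2.1 - x.1 * y.1) • z.2.2)

private lemma id1 (x y z : M') : pmul (pmul x y) z = ptrip x z y - ptrip y z x := by
  simp only [pmul, ptrip, Prod.mk_sub_mk, Prod.mk_add_mk, Prod.neg_mk, Prod.mk.injEq,
    map_sub, map_add, map_smul, smul_eq_mul,
    LinearMap.sub_apply, LinearMap.add_apply, LinearMap.smul_apply, Prod.ext_iff]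
  refine ⟨by ring, by module, by module⟩

private lemma id2 (a b x y : M') :
    ptrip a b (pmul x y) = - pmul (ptrip b a x) y - pmul x (ptrip b a y) := by
  simp only [pmul, ptrip, Prod.mk_sub_mk, Prod.mk_add_mk, Prod.neg_mk, Prod.mk.injEq,
    map_sub, map_add, map_smul, smul_eq_mul,
    LinearMap.sub_apply, LinearMap.add_apply, LinearMap.smul_apply, Prod.ext_iff]
  refine ⟨by ring, by module, by module⟩

private lemma id3 (a b x y z : M') :
    ptrip a b (ptrip x y z) - ptrip x y (ptrip a b z)
      = ptrip (ptrip a b x) y z - ptrip x (ptrip b a y) z := by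
  simp only [pmul, ptrip, Prod.mk_sub_mk, Prod.mk_add_mk, Prod.neg_mk, Prod.mk.injEq,
    map_sub, map_add, map_smul, smul_eq_mul,
    LinearMap.sub_apply, LinearMap.add_apply, LinearMap.smul_apply, Prod.ext_iff]
  refine ⟨by ring, by module, by module⟩

private lemma id4 (x y z t : M') :
    ptrip (pmul x y) z t + ptrip (pmul y z) x t + ptrip (pmul z x) y t = 0 := by
  simp only [pmul, ptrip, Prod.mk_sub_mk, Prod.mk_add_mk, Prod.neg_mk, Prod.mk.injEq,
    map_sub, map_add, map_smul, smul_eq_mul, Prod.mk_eq_zero, Prod.fst_zero, Prod.snd_zero,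
    LinearMap.sub_apply, LinearMap.add_apply, LinearMap.smul_apply, Prod.ext_iff]
  refine ⟨by ring, by module, by module⟩

private lemma id5 (x y z t : M') :
    ptrip x (pmul y z) t + ptrip y (pmul z x) t + ptrip z (pmul x y) t = 0 := by
  simp only [pmul, ptrip, Prod.mk_sub_mk, Prod.mk_add_mk, Prod.neg_mk, Prod.mk.injEq,
    map_sub, map_add, map_smul, smul_eq_mul, Prod.mk_eq_zero, Prod.fst_zero, Prod.snd_zero,
    LinearMap.sub_apply, LinearMap.add_apply, LinearMap.smul_apply, Prod.ext_iff]
  refine ⟨by ring, by module, by module⟩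


private def pJ : M' → M' → M' → M' := fun x y z =>
  pmul (pmul x y) z + pmul (pmul y z) x + pmul (pmul z x) y

private lemma notMalcev (hk2 : (2:k) ≠ 0) (hrank : 2 ≤ Module.rank k E) :
    ¬ (∀ x y z : M', pJ x y (pmul x z) = pmul (pJ x y z) x) := by
  intro h
  have h1 : (1:Cardinal) < Module.rank k E :=
    lt_of_lt_of_le (by norm_num) hrank
  have hnt : Nontrivial E := by
    rw [← rank_pos_iff_nontrivial (R := k)]
    exact lt_trans zero_lt_one h1
  obtain ⟨x0, hx0⟩ := exists_ne (0 : E)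
  obtain ⟨y0, hli⟩ := exists_linearIndependent_pair_of_one_lt_rank h1 hx0
  have hxy : x0 ≠ y0 := by
    have := hli.injective.ne (a₁ := 0) (a₂ := 1) (by decide)
    simpa using this
  have hlis := hli.linearIndepOn_id
  let B := Module.Basis.extend hlis
  have hmx : x0 ∈ hlis.extend (Set.subset_univ _) :=
    hlis.subset_extend _ ⟨0, by simp⟩
  have hmy : y0 ∈ hlis.extend (Set.subset_univ _) :=
    hlis.subset_extend _ ⟨1, by simp⟩
  set f1 : Module.Dual k E := B.coord ⟨x0, hmx⟩ with hf1
  set f2 : Module.Dual k E := B.coord ⟨y0, hmy⟩ with hf2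
  have hbx : x0 = B ⟨x0, hmx⟩ := (Module.Basis.extend_apply_self hlis ⟨x0, hmx⟩).symm
  have hby : y0 = B ⟨y0, hmy⟩ := (Module.Basis.extend_apply_self hlis ⟨y0, hmy⟩).symm
  have hne : (⟨y0, hmy⟩ : hlis.extend (Set.subset_univ _)) ≠ ⟨x0, hmx⟩ :=
    fun hc => hxy (congrArg Subtype.val hc).symm
  have e11 : f1 x0 = 1 := by
    rw [hf1, congrArg (B.coord ⟨x0, hmx⟩) hbx, Module.Basis.coord_apply, Module.Basis.repr_self,
      Finsupp.single_eq_same]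
  have e12 : f1 y0 = 0 := by
    rw [hf1, congrArg (B.coord ⟨x0, hmx⟩) hby, Module.Basis.coord_apply, Module.Basis.repr_self,
      Finsupp.single_eq_of_ne' hne]
  have e21 : f2 x0 = 0 := by
    rw [hf2, congrArg (B.coord ⟨y0, hmy⟩) hbx, Module.Basis.coord_apply, Module.Basis.repr_self,
      Finsupp.single_eq_of_ne' hne.symm]
  have e22 : f2 y0 = 1 := by
    rw [hf2, congrArg (B.coord ⟨y0, hmy⟩) hby, Module.Basis.coord_apply, Module.Basis.repr_self,
      Finsupp.single_eq_same]
  have key := congrArg Prod.fst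
    (h ((0:k), y0, f2) ((0:k), (0:E), f1) ((0:k), x0, (0 : Module.Dual k E)))
  simp only [pJ, pmul, Prod.mk_add_mk, Prod.mk_sub_mk, Prod.fst_add, Prod.snd_add,
    map_sub, map_add, map_smul, map_zero, smul_eq_mul, zero_smul, smul_zero, zero_mul, mul_zero,
    LinearMap.sub_apply, LinearMap.add_apply, LinearMap.smul_apply, LinearMap.zero_apply,
    zero_sub, sub_zero, zero_add, add_zero, neg_zero, sub_self,
    e11, e12, e21, e22] at key
  simp only [map_neg, map_smul, e22, smul_eq_mul, mul_one, one_mul, sub_neg_eq_add] at key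
  exact hk2 (by linear_combination -key)

end aux

/-- On M = ka ⊕ E ⊕ E*, the products from Example 5.2 (special Lie algebras)
satisfy the generalized Malcev algebra identities (1)-(4); moreover, if
dim E ≥ 2, the binary product is not a Malcev product. -/
theorem stmt14 (k : Type*) [Field k] (hk2 : (2:k) ≠ 0) (hk3 : (3:k) ≠ 0)
    (E : Type*) [AddCommGroup E] [Module k E] :
    let M := k × E × Module.Dual k E
    let mul : M → M → M := fun x y =>
      (x.2.2 y.2.1 - y.2.2 x.2.1,
       y.1 • x.2.1 - x.1 • y.2.1,
       x.1 • y.2.2 - y.1 • x.2.2)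
    let trip : M → M → M → M := fun x y z =>
      (2 * x.1 * y.1 * z.1 - z.1 * (y.2.2 x.2.1 + x.2.2 y.2.1),
       y.2.2 z.2.1 • x.2.1 - x.2.2 z.2.1 • y.2.1
         + (y.2.2 x.2.1 - x.1 * y.1) • z.2.1,
       z.2.2 y.2.1 • x.2.2 - z.2.2 x.2.1 • y.2.2
         + (x.2.2 y.2.1 - x.1 * y.1) • z.2.2)
    let J : M → M → M → M := fun x y z =>
      mul (mul x y) z + mul (mul y z) x + mul (mul z x) y
    ((∀ x y z, mul (mul x y) z = trip x z y - trip y z x) ∧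
     (∀ a b x y,
       trip a b (mul x y) = - mul (trip b a x) y - mul x (trip b a y)) ∧
     (∀ a b x y z,
       trip a b (trip x y z) - trip x y (trip a b z)
         = trip (trip a b x) y z - trip x (trip b a y) z) ∧
     (∀ x y z t,
       trip (mul x y) z t + trip (mul y z) x t + trip (mul z x) y t = 0) ∧
     (∀ x y z t,
       trip x (mul y z) t + trip y (mul z x) t + trip z (mul x y) t = 0)) ∧
    (2 ≤ Module.rank k E →
      ¬ (∀ x y z : M, J x y (mul x z) = mul (J x y z) x)) := by
  intro M mul trip J
  exact ⟨⟨fun x y z => id1 x y z, fun a b x y => id2 a b x y,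
    fun a b x y z => id3 a b x y z, fun x y z t => id4 x y z t,
    fun x y z t => id5 x y z t⟩, fun hr hall => notMalcev hk2 hr hall⟩
end

section
/- Let $(A, \cdot, -)$ be an algebra with involution and $\mathfrak{lrt}(A)$ its Lie algebra of Lie related triples. Then the maps $\varphi(d_0,d_1,d_2) = (d_2,d_0,d_1)$ and $\tau(d_0,d_1,d_2) = (\bar d_0, \bar d_2, \bar d_1)$, where $\bar d(x) = \overline{d(\bar x)}$, are Lie algebra automorphisms of $\mathfrak{lrt}(A)$ satisfying $\varphi^3 = \mathrm{id}$, $\tau^2 = \mathrm{id}$, and $\tau \varphi \tau = \varphi^2$ (thus generating an action of $S_3$). -/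
/-- The maps φ(d₀,d₁,d₂) = (d₂,d₀,d₁) and τ(d₀,d₁,d₂) = (d̄₀,d̄₂,d̄₁) are Lie
algebra automorphisms of the Lie algebra of Lie related triples, with
φ³ = id, τ² = id and τφτ = φ². -/
theorem stmt16 (k : Type*) [Field k] (hk2 : (2:k) ≠ 0) (hk3 : (3:k) ≠ 0)
    (A : Type*) [AddCommGroup A] [Module k A]
    (mul : A →ₗ[k] A →ₗ[k] A)
    (inv : A →ₗ[k] A)
    (hinv_inv : ∀ x, inv (inv x) = x)
    (hinv_mul : ∀ x y, inv (mul x y) = mul (inv y) (inv x)) :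
    let barD : Module.End k A → Module.End k A := fun f => inv ∘ₗ f ∘ₗ inv
    let lrt : Set (Fin 3 → Module.End k A) :=
      {d | ∀ i x y, inv (d i (inv (mul x y)))
        = mul (d (i+1) x) y + mul x (d (i+2) y)}
    let φ : (Fin 3 → Module.End k A) → (Fin 3 → Module.End k A) :=
      fun d i => d (i + 2)
    let τ : (Fin 3 → Module.End k A) → (Fin 3 → Module.End k A) :=
      fun d i => barD (d (-i))
    (∀ d ∈ lrt, φ d ∈ lrt) ∧
    (∀ d ∈ lrt, τ d ∈ lrt) ∧
    (∀ d e : Fin 3 → Module.End k A,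
      φ (fun i => d i * e i - e i * d i)
        = fun i => (φ d) i * (φ e) i - (φ e) i * (φ d) i) ∧
    (∀ d e : Fin 3 → Module.End k A,
      τ (fun i => d i * e i - e i * d i)
        = fun i => (τ d) i * (τ e) i - (τ e) i * (τ d) i) ∧
    (∀ d, φ (φ (φ d)) = d) ∧
    (∀ d, τ (τ d) = d) ∧
    (∀ d, τ (φ (τ d)) = φ (φ d)) := by
  intro barD lrt φ τ
  refine ⟨?_, ?_, ?_, ?_, ?_, ?_, ?_⟩
  · intro d hd i x y
    fin_cases i
    · exact hd 2 x y
    · exact hd 0 x y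
    · exact hd 1 x y
  · intro d hd
    have key : ∀ (i : Fin 3) x y, inv (inv (d i (inv (inv ((mul x) y))))) =
        (mul (inv (d (i+2) (inv x)))) y + (mul x) (inv (d (i+1) (inv y))) := by
      intro i x y
      rw [hinv_inv ((mul x) y), hinv_inv]
      have h := hd i (inv y) (inv x)
      rw [← hinv_mul x y, hinv_inv] at h
      conv_lhs => rw [← hinv_inv (d i ((mul x) y)), h]
      rw [map_add, hinv_mul, hinv_mul, hinv_inv, hinv_inv, add_comm]
    intro i x y
    fin_cases i
    · exact key 0 x y
    · exact key 2 x y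
    · exact key 1 x y
  · intro d e; rfl
  · intro d e
    funext i
    show barD (d (-i) * e (-i) - e (-i) * d (-i))
      = barD (d (-i)) * barD (e (-i)) - barD (e (-i)) * barD (d (-i))
    ext x
    simp [barD, Module.End.mul_apply, hinv_inv]
  · intro d
    funext i
    fin_cases i <;> rfl
  · intro d
    funext i
    show barD (barD (d (- -i))) = d i
    ext x
    simp [barD, hinv_inv]
  · intro d
    funext i
    fin_cases i <;> ext x <;> simp [τ, φ, barD, hinv_inv] <;> rfl
end
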